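/- arXiv:2506.13593 — 4 statements merged into one kernel-verified Lean document; each statement's English description precedes it below -/
import Mathlib

section
/- Let n be a positive integer, B > 0, M > 0, and let f_1,…,f_n be positive reals with f_i ≤ M for every i. Let π* ∈ (0,1]^n be a minimizer of the objective (1/n) Σ_{i=1}^n 1/π_i over π ∈ (0,1]^n subject to the constraint Σ_{i=1}^n f_i π_i ≤ B. Then for every i, the induced weight satisfies 1/π*_i ≤ max(nM/B, 1); equivalently, π*_i ≥ min(B/(nM), 1). -/
open scoped BigOperators

set_option maxHeartbeats 1000000 in
/-- Maximal weight bound for the optimized budget allocation.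
If `π*` minimizes `(1/n) ∑ 1/π_i` over `π ∈ (0,1]^n` subject to `∑ f_i π_i ≤ B`,
where `0 < f_i ≤ M`, then every coordinate satisfies `π*_i ≥ min(B/(nM), 1)`;
equivalently the induced weight satisfies `1/π*_i ≤ max(nM/B, 1)`. -/
theorem stmt_3 (n : ℕ) (hn : 0 < n) (B M : ℝ) (hB : 0 < B) (hM : 0 < M)
    (f : Fin n → ℝ) (hf : ∀ i, 0 < f i) (hfM : ∀ i, f i ≤ M)
    (πs : Fin n → ℝ) (hπs : ∀ i, πs i ∈ Set.Ioc (0 : ℝ) 1)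
    (hπsB : ∑ i, f i * πs i ≤ B)
    (hmin : ∀ π : Fin n → ℝ, (∀ i, π i ∈ Set.Ioc (0 : ℝ) 1) → ∑ i, f i * π i ≤ B →
      (1 / (n : ℝ)) * ∑ i, 1 / πs i ≤ (1 / (n : ℝ)) * ∑ i, 1 / π i) :
    ∀ i, 1 / πs i ≤ max ((n : ℝ) * M / B) 1 ∧ min (B / ((n : ℝ) * M)) 1 ≤ πs i := by
  have hn' : (0 : ℝ) < n := by exact_mod_cast hn
  have hnM : (0 : ℝ) < n * M := by positivity
  set c : ℝ := min (B / ((n : ℝ) * M)) 1 with hc_def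
  have hc0 : 0 < c := lt_min (by positivity) one_pos
  have hc1 : c ≤ 1 := min_le_right _ _
  have hcB : c ≤ B / ((n : ℝ) * M) := min_le_left _ _
  -- main claim
  have main : ∀ i, c ≤ πs i := by
    intro i
    by_contra hcon
    push_neg at hcon
    set a := πs i with ha_def
    have ha0 : 0 < a := (hπs i).1
    have ha1 : a ≤ 1 := (hπs i).2
    have haC : a < c := hcon
    have hfa : f i * a < B / n := by
      have h1 : f i * a ≤ M * a := mul_le_mul_of_nonneg_right (hfM i) ha0.le
      have h2 : M * a < M * c := (mul_lt_mul_iff_right₀ hM).mpr haC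
      have h3 : M * c ≤ M * (B / ((n:ℝ) * M)) := mul_le_mul_of_nonneg_left hcB hM.le
      have h4 : M * (B / ((n:ℝ) * M)) = B / n := by
        field_simp
      linarith
    have hmono : ∀ π : Fin n → ℝ, (∀ k, π k ∈ Set.Ioc (0 : ℝ) 1) → ∑ k, f k * π k ≤ B →
        ∑ k, 1 / πs k ≤ ∑ k, 1 / π k := by
      intro π h1 h2
      have := hmin π h1 h2
      have hpos : (0:ℝ) < 1 / n := by positivity
      exact le_of_mul_le_mul_left (by linarith [this]) hpos
    rcases lt_or_eq_of_le hπsB with hS | hS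
    · -- slack case: raise coordinate i
      set S := ∑ k, f k * πs k with hS_def
      have hfi := hf i
      set d := (B - S) / f i with hd_def
      have hd : 0 < d := by apply div_pos <;> linarith
      set a' := min 1 (a + d) with ha'_def
      have haa' : a < a' := lt_min (lt_of_lt_of_le haC hc1) (by linarith)
      have ha'1 : a' ≤ 1 := min_le_left _ _
      have ha'0 : 0 < a' := lt_trans ha0 haa'
      set π' : Fin n → ℝ := fun k => if k = i then a' else πs k with hπ'_def
      have hmem : ∀ k, π' k ∈ Set.Ioc (0 : ℝ) 1 := by
        intro k
        by_cases hk : k = i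
        · simp [hπ'_def, hk]; exact ⟨ha'0, ha'1⟩
        · simp [hπ'_def, hk]; exact ⟨(hπs k).1, (hπs k).2⟩
      have split : ∀ g : Fin n → ℝ, ∑ k, g k = g i + ∑ k ∈ Finset.univ.erase i, g k := by
        intro g
        rw [← Finset.add_sum_erase _ g (Finset.mem_univ i)]
      have hEq1 : ∑ k ∈ Finset.univ.erase i, f k * π' k = ∑ k ∈ Finset.univ.erase i, f k * πs k := by
        apply Finset.sum_congr rfl
        intro k hk
        have : k ≠ i := (Finset.mem_erase.mp hk).1
        simp [hπ'_def, this]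
      have hEq2 : ∑ k ∈ Finset.univ.erase i, 1 / π' k = ∑ k ∈ Finset.univ.erase i, 1 / πs k := by
        apply Finset.sum_congr rfl
        intro k hk
        have : k ≠ i := (Finset.mem_erase.mp hk).1
        simp [hπ'_def, this]
      have hπ'i : π' i = a' := by simp [hπ'_def]
      have hcons : ∑ k, f k * π' k ≤ B := by
        rw [split (fun k => f k * π' k), hEq1, hπ'i]
        have hSeq : S = f i * a + ∑ k ∈ Finset.univ.erase i, f k * πs k := by
          rw [hS_def, split (fun k => f k * πs k)]
        have h1 : f i * a' ≤ f i * (a + d) :=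
          mul_le_mul_of_nonneg_left (min_le_right _ _) hfi.le
        have h2 : f i * d = B - S := by
          rw [hd_def]; field_simp
        rw [mul_add] at h1
        linarith
      have hobj := hmono π' hmem hcons
      rw [split (fun k => 1 / πs k), split (fun k => 1 / π' k), hEq2, hπ'i] at hobj
      have : 1 / a' < 1 / a := one_div_lt_one_div_of_lt ha0 haa'
      linarith
    · -- tight case: trade between i and a heavy coordinate j
      have hSB : ∑ k, f k * πs k = B := hS
      -- find j ≠ i with f j * πs j > B / n
      have hex : ∃ j, j ≠ i ∧ B / n < f j * πs j := by
        by_contra hno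
        push_neg at hno
        have hbound : ∑ k ∈ Finset.univ.erase i, f k * πs k ≤ (Finset.univ.erase i).card • (B / n) := by
          apply Finset.sum_le_card_nsmul
          intro k hk
          exact hno k (Finset.mem_erase.mp hk).1
        have hcard : (Finset.univ.erase i).card = n - 1 := by
          simp [Finset.card_erase_of_mem]
        rw [hcard] at hbound
        have hcast : ((n - 1 : ℕ) : ℝ) = (n : ℝ) - 1 := by
          have : 1 ≤ n := hn
          push_cast [Nat.cast_sub this]
          ring
        rw [nsmul_eq_mul, hcast] at hbound
        have hSeq : B = f i * a + ∑ k ∈ Finset.univ.erase i, f k * πs k := by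
          rw [← hSB, ← Finset.add_sum_erase _ _ (Finset.mem_univ i)]
        have hBn : ((n : ℝ) - 1) * (B / n) = B - B / n := by
          field_simp
        linarith [hSeq, hbound, hfa]
      obtain ⟨j, hji, hj⟩ := hex
      set b := πs j with hb_def
      have hb0 : 0 < b := (hπs j).1
      have hb1 : b ≤ 1 := (hπs j).2
      have hfj := hf j
      have hfi := hf i
      have hba : a < b := by
        have h1 : f j * b ≤ M * b := mul_le_mul_of_nonneg_right (hfM j) hb0.le
        have h2 : M * c ≤ B / n := by
          have h4 : M * (B / ((n:ℝ) * M)) = B / n := by field_simp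
          have h5 := mul_le_mul_of_nonneg_left hcB hM.le
          linarith
        have h6 : M * c < M * b := by linarith
        have h7 : c < b := lt_of_mul_lt_mul_left h6 hM.le
        linarith
      have hkey0 : f i * a * a < f j * b * b := by
        have t1 := mul_lt_mul_of_pos_right (show f i * a < f j * b from lt_trans hfa hj) ha0
        have t2 := mul_lt_mul_of_pos_left hba (mul_pos hfj hb0)
        linarith
      set K := f j * b * b - f i * a * a with hK_def
      have hK : 0 < K := by rw [hK_def]; linarith
      set ε := min (1 - a) (min (f j * b / (2 * f i)) (K / (2 * f i * (a + b)))) with hε_def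
      have hε0 : 0 < ε := by
        apply lt_min
        · linarith [lt_of_lt_of_le haC hc1]
        · apply lt_min
          · positivity
          · positivity
      have hε1 : a + ε ≤ 1 := by
        have := min_le_left (1 - a) (min (f j * b / (2 * f i)) (K / (2 * f i * (a + b))))
        linarith
      have hε2 : ε ≤ f j * b / (2 * f i) :=
        le_trans (min_le_right _ _) (min_le_left _ _)
      have hε3 : ε ≤ K / (2 * f i * (a + b)) :=
        le_trans (min_le_right _ _) (min_le_right _ _)
      set η := f i * ε / f j with hη_def
      have hη0 : 0 < η := by positivity
      have hηb : η < b := by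
        rw [hη_def]
        rw [div_lt_iff₀ hfj]
        have h1 : f i * ε ≤ f i * (f j * b / (2 * f i)) :=
          mul_le_mul_of_nonneg_left hε2 hfi.le
        have h2 : f i * (f j * b / (2 * f i)) = f j * b / 2 := by field_simp
        have h3 : 0 < b * f j := mul_pos hb0 hfj
        -- f i * ε ≤ f j * b / 2 < b * f j
        rw [h2] at h1
        linarith
      have hηε : f j * η = f i * ε := by rw [hη_def]; field_simp
      -- key inequality
      have hkey : f i * a * (a + ε) < f j * b * (b - η) := by
        have h1 : f i * ε * (a + b) ≤ K / 2 := by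
          have h2 : f i * ε * (a + b) ≤ f i * (K / (2 * f i * (a + b))) * (a + b) := by
            have h2a := mul_le_mul_of_nonneg_left hε3 hfi.le
            exact mul_le_mul_of_nonneg_right h2a (by positivity)
          have h3 : f i * (K / (2 * f i * (a + b))) * (a + b) = K / 2 := by
            field_simp
          linarith
        have h4 : f j * b * η = b * (f i * ε) := by rw [← hηε]; ring
        have h5 : K = f j * b * b - f i * a * a := hK_def
        linarith [h1, h4, h5, hK]
      set π' : Fin n → ℝ := fun k => if k = i then a + ε else if k = j then b - η else πs k
        with hπ'_def
      have hmem : ∀ k, π' k ∈ Set.Ioc (0 : ℝ) 1 := by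
        intro k
        by_cases hk : k = i
        · simp [hπ'_def, hk]; constructor <;> linarith
        · by_cases hk2 : k = j
          · simp [hπ'_def, hk, hk2, hji]; constructor <;> linarith
          · simp [hπ'_def, hk, hk2]; exact ⟨(hπs k).1, (hπs k).2⟩
      have hjmem : j ∈ Finset.univ.erase i := Finset.mem_erase.mpr ⟨hji, Finset.mem_univ j⟩
      have split : ∀ g : Fin n → ℝ, ∑ k, g k =
          g i + (g j + ∑ k ∈ (Finset.univ.erase i).erase j, g k) := by
        intro g
        rw [← Finset.add_sum_erase _ g (Finset.mem_univ i),
            ← Finset.add_sum_erase _ g hjmem]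
      have hrest : ∀ k ∈ (Finset.univ.erase i).erase j, π' k = πs k := by
        intro k hk
        have h1 : k ≠ j := (Finset.mem_erase.mp hk).1
        have h2 : k ≠ i := (Finset.mem_erase.mp (Finset.mem_erase.mp hk).2).1
        simp [hπ'_def, h1, h2]
      have hEq1 : ∑ k ∈ (Finset.univ.erase i).erase j, f k * π' k
          = ∑ k ∈ (Finset.univ.erase i).erase j, f k * πs k :=
        Finset.sum_congr rfl fun k hk => by rw [hrest k hk]
      have hEq2 : ∑ k ∈ (Finset.univ.erase i).erase j, 1 / π' k
          = ∑ k ∈ (Finset.univ.erase i).erase j, 1 / πs k :=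
        Finset.sum_congr rfl fun k hk => by rw [hrest k hk]
      have hπ'i : π' i = a + ε := by simp [hπ'_def]
      have hπ'j : π' j = b - η := by simp [hπ'_def, hji]
      have hcons : ∑ k, f k * π' k ≤ B := by
        rw [split (fun k => f k * π' k), hEq1, hπ'i, hπ'j]
        have hSeq : B = f i * a + (f j * b + ∑ k ∈ (Finset.univ.erase i).erase j, f k * πs k) := by
          rw [← hSB, split (fun k => f k * πs k)]
        have e1 : f i * (a + ε) = f i * a + f i * ε := by ring
        have e2 : f j * (b - η) = f j * b - f j * η := by ring
        rw [e1, e2, hηε]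
        linarith
      have hobj := hmono π' hmem hcons
      rw [split (fun k => 1 / πs k), split (fun k => 1 / π' k), hEq2, hπ'i, hπ'j] at hobj
      -- show 1/(a+ε) + 1/(b-η) < 1/a + 1/b
      have hbη : 0 < b - η := by linarith
      have haε : 0 < a + ε := by linarith
      have e1 : 1 / a - 1 / (a + ε) = ε / (a * (a + ε)) := by
        rw [div_sub_div _ _ ha0.ne' haε.ne', one_mul, mul_one, add_sub_cancel_left]
      have e2 : 1 / (b - η) - 1 / b = η / (b * (b - η)) := by
        rw [div_sub_div _ _ hbη.ne' hb0.ne', one_mul, mul_one, sub_sub_cancel, mul_comm]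
      have e3 : η / (b * (b - η)) < ε / (a * (a + ε)) := by
        rw [div_lt_div_iff₀ (by positivity) (by positivity)]
        have hmul : f i * (a * (a + ε)) < f j * (b * (b - η)) := by
          have : f i * (a * (a + ε)) = f i * a * (a + ε) := by ring
          rw [this]
          have : f j * (b * (b - η)) = f j * b * (b - η) := by ring
          rw [this]
          exact hkey
        have hmul2 : ε * (f i * (a * (a + ε))) < ε * (f j * (b * (b - η))) :=
          mul_lt_mul_of_pos_left hmul hε0
        have hsub : ε * (f i * (a * (a + ε))) = f j * (η * (a * (a + ε))) := by
          rw [show f j * (η * (a * (a + ε))) = (f j * η) * (a * (a + ε)) by ring, hηε]; ring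
        have hsub2 : ε * (f j * (b * (b - η))) = f j * (ε * (b * (b - η))) := by ring
        rw [hsub, hsub2] at hmul2
        exact lt_of_mul_lt_mul_left hmul2 hfj.le
      linarith
  intro i
  have hge := main i
  refine ⟨?_, hge⟩
  have hp0 : 0 < πs i := (hπs i).1
  rcases le_total (B / ((n : ℝ) * M)) 1 with h | h
  · have hcx : c = B / ((n : ℝ) * M) := min_eq_left h
    have h1 : 1 / πs i ≤ 1 / c := one_div_le_one_div_of_le hc0 hge
    have h2 : 1 / c = (n : ℝ) * M / B := by
      rw [hcx, one_div_div]
    rw [h2] at h1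
    exact le_trans h1 (le_max_left _ _)
  · have hcx : c = 1 := min_eq_right h
    have h1 : 1 / πs i ≤ 1 / c := one_div_le_one_div_of_le hc0 hge
    rw [hcx] at h1
    simpa using le_trans h1 (le_max_right _ _)
end

section
/- Let n be a positive integer and f_1,…,f_n positive reals. For λ > 0 define π_i(λ) = min(1, 1/√(n λ f_i)) and the budget-usage function U(λ) = Σ_{i=1}^n f_i π_i(λ). Then U is continuous and non-increasing on (0,∞), is strictly decreasing at every λ with U(λ) < Σ_{i=1}^n f_i, and satisfies lim_{λ→0⁺} U(λ) = Σ_{i=1}^n f_i and lim_{λ→∞} U(λ) = 0. Consequently, for every B with 0 < B < Σ_{i=1}^n f_i there exists a unique λ* > 0 with U(λ*) = B. -/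
open scoped BigOperators
open Filter

private lemma Real.sqrt_le_one' {x : ℝ} (h : x ≤ 1) : Real.sqrt x ≤ 1 :=
  Real.sqrt_le_one.mpr h

/-- Properties of the budget-usage function
`U(λ) = ∑ f_i · min(1, 1/√(n λ f_i))`: it is continuous and non-increasing on `(0,∞)`,
strictly decreasing at every `λ` with `U(λ) < ∑ f_i`, tends to `∑ f_i` as `λ → 0⁺`
and to `0` as `λ → ∞`; consequently, for every `0 < B < ∑ f_i` there is a unique
`λ* > 0` with `U(λ*) = B`. -/
theorem stmt_5 (n : ℕ) (hn : 0 < n) (f : Fin n → ℝ) (hf : ∀ i, 0 < f i)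
    (U : ℝ → ℝ)
    (hU : U = fun lam => ∑ i, f i * min 1 (1 / Real.sqrt ((n : ℝ) * lam * f i))) :
    ContinuousOn U (Set.Ioi 0) ∧
    AntitoneOn U (Set.Ioi 0) ∧
    (∀ lam₁ lam₂ : ℝ, 0 < lam₁ → lam₁ < lam₂ → U lam₁ < ∑ i, f i → U lam₂ < U lam₁) ∧
    Tendsto U (nhdsWithin 0 (Set.Ioi 0)) (nhds (∑ i, f i)) ∧
    Tendsto U atTop (nhds 0) ∧
    (∀ B : ℝ, 0 < B → B < ∑ i, f i → ∃! lam : ℝ, 0 < lam ∧ U lam = B) := by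
  have hn' : (0:ℝ) < n := by exact_mod_cast hn
  have hpos : ∀ (i : Fin n) (lam : ℝ), 0 < lam → 0 < (n:ℝ) * lam * f i := by
    intro i lam hl
    have := hf i
    positivity
  -- continuity
  have hcont : ContinuousOn U (Set.Ioi 0) := by
    rw [hU]
    apply continuousOn_finset_sum
    intro i _
    apply ContinuousOn.mul continuousOn_const
    apply ContinuousOn.inf continuousOn_const
    apply ContinuousOn.div continuousOn_const
    · exact (Real.continuous_sqrt.comp (by continuity)).continuousOn
    · intro x hx
      exact ne_of_gt (Real.sqrt_pos.mpr (hpos i x hx))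
  -- monotonicity of inner function
  have hmono : ∀ (i : Fin n) ⦃a b : ℝ⦄, 0 < a → a ≤ b →
      min 1 (1 / Real.sqrt ((n:ℝ)*b*f i)) ≤ min 1 (1 / Real.sqrt ((n:ℝ)*a*f i)) := by
    intro i a b ha hab
    refine min_le_min le_rfl ?_
    apply one_div_le_one_div_of_le (Real.sqrt_pos.mpr (hpos i a ha))
    apply Real.sqrt_le_sqrt
    have h1 : (n:ℝ) * a ≤ (n:ℝ) * b := mul_le_mul_of_nonneg_left hab hn'.le
    exact mul_le_mul_of_nonneg_right h1 (hf i).le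
  have hanti : AntitoneOn U (Set.Ioi 0) := by
    intro a ha b hb hab
    rw [hU]
    exact Finset.sum_le_sum fun i _ =>
      mul_le_mul_of_nonneg_left (hmono i ha hab) (hf i).le
  -- strict decrease
  have hstrict : ∀ lam₁ lam₂ : ℝ, 0 < lam₁ → lam₁ < lam₂ → U lam₁ < ∑ i, f i → U lam₂ < U lam₁ := by
    intro lam₁ lam₂ h1 h12 hlt
    have h2 : 0 < lam₂ := h1.trans h12
    have hex : ∃ i : Fin n, 1 < (n:ℝ) * lam₁ * f i := by
      by_contra h
      push_neg at h
      have : U lam₁ = ∑ i, f i := by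
        rw [hU]
        refine Finset.sum_congr rfl fun i _ => ?_
        have hs : Real.sqrt ((n:ℝ)*lam₁*f i) ≤ 1 := Real.sqrt_le_one' (h i)
        have hsp : 0 < Real.sqrt ((n:ℝ)*lam₁*f i) := Real.sqrt_pos.mpr (hpos i lam₁ h1)
        rw [min_eq_left (by rw [le_div_iff₀ hsp]; linarith), mul_one]
      linarith
    obtain ⟨i, hi⟩ := hex
    rw [hU]
    refine Finset.sum_lt_sum (fun j _ => mul_le_mul_of_nonneg_left (hmono j h1 h12.le) (hf j).le)
      ⟨i, Finset.mem_univ i, ?_⟩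
    apply mul_lt_mul_of_pos_left _ (hf i)
    have hs1 : 1 < Real.sqrt ((n:ℝ)*lam₁*f i) := by
      rw [show (1:ℝ) = Real.sqrt 1 from (Real.sqrt_one).symm]
      exact Real.sqrt_lt_sqrt zero_le_one hi
    have hs12 : Real.sqrt ((n:ℝ)*lam₁*f i) < Real.sqrt ((n:ℝ)*lam₂*f i) := by
      apply Real.sqrt_lt_sqrt (hpos i lam₁ h1).le
      have := hf i
      nlinarith
    calc min 1 (1 / Real.sqrt ((n:ℝ)*lam₂*f i)) ≤ 1 / Real.sqrt ((n:ℝ)*lam₂*f i) := min_le_right _ _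
      _ < 1 / Real.sqrt ((n:ℝ)*lam₁*f i) := by
          apply one_div_lt_one_div_of_lt (by linarith) hs12
      _ = min 1 (1 / Real.sqrt ((n:ℝ)*lam₁*f i)) := by
          rw [min_eq_right]
          rw [div_le_one (by linarith)]
          linarith
  -- bound M
  obtain ⟨M, hM, hMpos⟩ : ∃ M : ℝ, (∀ i, f i ≤ M) ∧ 0 < M := by
    refine ⟨∑ i, f i, fun i => Finset.single_le_sum (fun j _ => (hf j).le) (Finset.mem_univ i), ?_⟩
    exact Finset.sum_pos (fun j _ => hf j) ⟨⟨0, hn⟩, Finset.mem_univ _⟩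
  set ε : ℝ := 1 / ((n:ℝ) * M) with hε
  have hεpos : 0 < ε := by positivity
  have hUconst : ∀ lam : ℝ, 0 < lam → lam ≤ ε → U lam = ∑ i, f i := by
    intro lam hl hle
    rw [hU]
    refine Finset.sum_congr rfl fun i _ => ?_
    have harg : (n:ℝ) * lam * f i ≤ 1 := by
      have h1 : (n:ℝ) * lam * f i ≤ (n:ℝ) * ε * f i := by
        have h0 : (n:ℝ) * lam ≤ (n:ℝ) * ε := mul_le_mul_of_nonneg_left hle hn'.le
        exact mul_le_mul_of_nonneg_right h0 (hf i).le
      have h2 : (n:ℝ) * ε * f i = f i / M := by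
        field_simp [hε]
        rw [hε]; field_simp
      rw [h2] at h1
      have := hM i
      calc (n:ℝ) * lam * f i ≤ f i / M := h1
        _ ≤ 1 := by rw [div_le_one hMpos]; exact hM i
    have hs : Real.sqrt ((n:ℝ)*lam*f i) ≤ 1 := Real.sqrt_le_one' harg
    have hsp : 0 < Real.sqrt ((n:ℝ)*lam*f i) := Real.sqrt_pos.mpr (hpos i lam hl)
    rw [min_eq_left (by rw [le_div_iff₀ hsp]; linarith), mul_one]
  -- limit at 0+
  have hlim0 : Tendsto U (nhdsWithin 0 (Set.Ioi 0)) (nhds (∑ i, f i)) := by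
    apply Tendsto.congr' _ tendsto_const_nhds
    filter_upwards [Ioo_mem_nhdsGT_of_mem (Set.left_mem_Ico.mpr hεpos)] with x hx
    exact (hUconst x hx.1 hx.2.le).symm
  -- limit at infinity
  have hlimtop : Tendsto U atTop (nhds 0) := by
    rw [hU]
    have : (0:ℝ) = ∑ i : Fin n, (0:ℝ) := by simp
    rw [this]
    apply tendsto_finset_sum
    intro i _
    have h1 : Tendsto (fun lam : ℝ => (n:ℝ) * lam * f i) atTop atTop := by
      apply Tendsto.atTop_mul_const (hf i)
      exact (tendsto_id.const_mul_atTop hn')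
    have h2 : Tendsto (fun lam : ℝ => 1 / Real.sqrt ((n:ℝ)*lam*f i)) atTop (nhds 0) := by
      simp only [one_div]
      have hsq : Tendsto Real.sqrt atTop atTop := by
        rw [tendsto_atTop_atTop]
        intro C
        refine ⟨(max C 0)^2, fun x hx => le_trans (le_max_left C 0) ?_⟩
        rw [show max C 0 = Real.sqrt ((max C 0)^2) from (Real.sqrt_sq (le_max_right C 0)).symm]
        exact Real.sqrt_le_sqrt hx
      exact (hsq.comp h1).inv_tendsto_atTop
    have h3 : Tendsto (fun lam : ℝ => min 1 (1 / Real.sqrt ((n:ℝ)*lam*f i))) atTop (nhds 0) := by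
      have := (tendsto_const_nhds (x := (1:ℝ)) (f := atTop)).min h2
      simpa using this
    simpa using h3.const_mul (f i)
  refine ⟨hcont, hanti, hstrict, hlim0, hlimtop, ?_⟩
  intro B hB hBlt
  -- find b with U b < B
  have hev : ∀ᶠ lam in atTop, U lam < B := hlimtop.eventually_lt_const hB
  obtain ⟨N, hN⟩ := hev.exists_forall_of_atTop
  set b : ℝ := max N (ε + 1) with hb
  have hεb : ε ≤ b := le_trans (by linarith) (le_max_right _ _)
  have hUb : U b < B := hN b (le_max_left _ _)
  have hUε : U ε = ∑ i, f i := hUconst ε hεpos le_rfl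
  have hsub : Set.Icc ε b ⊆ Set.Ioi 0 := fun x hx => lt_of_lt_of_le hεpos hx.1
  obtain ⟨lam, hlam_mem, hlam_eq⟩ :=
    intermediate_value_Icc' hεb (hcont.mono hsub) (by rw [hUε]; exact ⟨hUb.le, hBlt.le⟩)
  have hlam_pos : 0 < lam := lt_of_lt_of_le hεpos hlam_mem.1
  refine ⟨lam, ⟨hlam_pos, hlam_eq⟩, ?_⟩
  intro y ⟨hy_pos, hy_eq⟩
  by_contra hne
  rcases lt_or_gt_of_ne hne with h | h
  · have := hstrict y lam hy_pos h (by rw [hy_eq]; exact hBlt)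
    rw [hy_eq, hlam_eq] at this; exact lt_irrefl B this
  · have := hstrict lam y hlam_pos h (by rw [hlam_eq]; exact hBlt)
    rw [hy_eq, hlam_eq] at this; exact lt_irrefl B this
end

section
/- Let n be a positive integer, let f_1,…,f_n be positive reals, and let B satisfy 0 < B < Σ_{i=1}^n f_i. Let λ* > 0 be the unique solution of U(λ*) = B, where U(λ) = Σ_{i=1}^n f_i · min(1, 1/√(n λ f_i)). Then the vector π* with coordinates π*_i = min(1, 1/√(n λ* f_i)) is the unique minimizer of (1/n) Σ_{i=1}^n 1/π_i over π ∈ (0,1]^n subject to Σ_{i=1}^n f_i π_i ≤ B. -/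
open scoped BigOperators

lemma key_ineq (c x : ℝ) (hc : 0 < c) (hx : 0 < x) (hx1 : x ≤ 1) :
    1 / min 1 (1 / Real.sqrt c) + c * min 1 (1 / Real.sqrt c) ≤ 1 / x + c * x ∧
    (1 / min 1 (1 / Real.sqrt c) + c * min 1 (1 / Real.sqrt c) = 1 / x + c * x →
      x = min 1 (1 / Real.sqrt c)) := by
  set s := Real.sqrt c with hs
  have hs0 : 0 < s := Real.sqrt_pos.mpr hc
  have hs2 : s ^ 2 = c := Real.sq_sqrt hc.le
  rcases le_or_gt 1 s with h1 | h1
  · have hle : 1 / s ≤ 1 := by rw [div_le_one hs0]; exact h1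
    have hmin : min 1 (1 / s) = 1 / s := min_eq_right hle
    rw [hmin]
    have e1 : 1 / (1 / s) = s := by field_simp
    have e2 : c * (1 / s) = s := by field_simp; nlinarith
    rw [e1, e2]
    constructor
    · rw [div_add' _ _ _ hx.ne', le_div_iff₀ hx]
      have e : c * x * x = (s * x) ^ 2 := by rw [← hs2]; ring
      nlinarith [sq_nonneg (s * x - 1), e]
    · intro h
      have h' : (s + s) * x = 1 + c * x * x := by
        field_simp at h; nlinarith
      have hsx : (s * x - 1) ^ 2 = 0 := by
        have e : (s * x - 1) ^ 2 = c * x * x - (s + s) * x + 1 := by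
          rw [← hs2]; ring
        rw [e, h']; ring
      have hsx1 : s * x - 1 = 0 := by
        have := pow_eq_zero_iff (n := 2) (by norm_num) |>.mp hsx
        exact this
      rw [eq_div_iff hs0.ne']
      linarith [hsx1]
  · have hle : 1 ≤ 1 / s := by rw [le_div_iff₀ hs0]; nlinarith
    have hmin : min 1 (1 / s) = 1 := min_eq_left hle
    rw [hmin]
    have hc1 : c < 1 := by nlinarith
    have hcx : c * x < 1 := by nlinarith
    constructor
    · rw [div_add' _ _ _ hx.ne', le_div_iff₀ hx]
      nlinarith [mul_nonneg (by linarith : (0:ℝ) ≤ 1 - x) (by linarith : (0:ℝ) ≤ 1 - c * x)]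
    · intro h
      have h' : (1 + c * 1) * x = 1 + c * x * x := by
        field_simp at h ⊢; nlinarith
      by_contra hne
      have hxlt : x < 1 := lt_of_le_of_ne hx1 hne
      nlinarith [mul_pos (by linarith : (0:ℝ) < 1 - x) (by linarith : (0:ℝ) < 1 - c * x)]

/-- Let `0 < B < ∑ f_i` and let `λ* > 0` solve `U(λ*) = B`, where
`U(λ) = ∑ f_i · min(1, 1/√(n λ f_i))`. Then `π*` with `π*_i = min(1, 1/√(n λ* f_i))`
is the unique minimizer of `(1/n) ∑ 1/π_i` over `π ∈ (0,1]^n` with `∑ f_i π_i ≤ B`. -/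
theorem stmt_6 (n : ℕ) (hn : 0 < n) (B : ℝ) (hB : 0 < B)
    (f : Fin n → ℝ) (hf : ∀ i, 0 < f i) (hBf : B < ∑ i, f i)
    (lam : ℝ) (hlam : 0 < lam)
    (hUlam : ∑ i, f i * min 1 (1 / Real.sqrt ((n : ℝ) * lam * f i)) = B)
    (πs : Fin n → ℝ) (hπs : πs = fun i => min 1 (1 / Real.sqrt ((n : ℝ) * lam * f i))) :
    (∀ i, πs i ∈ Set.Ioc (0 : ℝ) 1) ∧
    (∑ i, f i * πs i ≤ B) ∧
    (∀ π : Fin n → ℝ, (∀ i, π i ∈ Set.Ioc (0 : ℝ) 1) → ∑ i, f i * π i ≤ B →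
      (1 / (n : ℝ)) * ∑ i, 1 / πs i ≤ (1 / (n : ℝ)) * ∑ i, 1 / π i) ∧
    (∀ π : Fin n → ℝ, (∀ i, π i ∈ Set.Ioc (0 : ℝ) 1) → ∑ i, f i * π i ≤ B →
      (1 / (n : ℝ)) * ∑ i, 1 / π i = (1 / (n : ℝ)) * ∑ i, 1 / πs i → π = πs) := by
  have hn' : (0 : ℝ) < n := Nat.cast_pos.mpr hn
  set c : Fin n → ℝ := fun i => (n : ℝ) * lam * f i with hc
  have hcpos : ∀ i, 0 < c i := fun i => by
    have := hf i; simp only [hc]; positivity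
  have hmem : ∀ i, πs i ∈ Set.Ioc (0 : ℝ) 1 := by
    intro i
    rw [hπs]
    refine ⟨lt_min one_pos ?_, min_le_left _ _⟩
    have hpos : (0:ℝ) < (n : ℝ) * lam * f i := by have := hf i; positivity
    exact one_div_pos.mpr (Real.sqrt_pos.mpr hpos)
  have hsum : ∑ i, f i * πs i = B := by rw [hπs]; exact hUlam
  have hkey : ∀ (π : Fin n → ℝ), (∀ i, π i ∈ Set.Ioc (0 : ℝ) 1) → ∀ i,
      1 / πs i + c i * πs i ≤ 1 / π i + c i * π i ∧
      (1 / πs i + c i * πs i = 1 / π i + c i * π i → π i = πs i) := by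
    intro π hπ i
    have := key_ineq (c i) (π i) (hcpos i) (hπ i).1 (hπ i).2
    rw [hπs]
    exact this
  have e1 : ∀ (g : Fin n → ℝ), ∑ i, c i * g i = (n : ℝ) * lam * ∑ i, f i * g i := by
    intro g
    rw [Finset.mul_sum]
    exact Finset.sum_congr rfl fun i _ => by simp only [hc]; ring
  have hmain : ∀ (π : Fin n → ℝ), (∀ i, π i ∈ Set.Ioc (0 : ℝ) 1) → ∑ i, f i * π i ≤ B →
      ∑ i, 1 / πs i ≤ ∑ i, 1 / π i := by
    intro π hπ hπB
    have h1 : ∑ i, (1 / πs i + c i * πs i) ≤ ∑ i, (1 / π i + c i * π i) :=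
      Finset.sum_le_sum fun i _ => (hkey π hπ i).1
    rw [Finset.sum_add_distrib, Finset.sum_add_distrib, e1, e1, hsum] at h1
    have h2 : (n : ℝ) * lam * (∑ i, f i * π i) ≤ (n : ℝ) * lam * B :=
      mul_le_mul_of_nonneg_left hπB (by positivity)
    linarith
  refine ⟨hmem, hsum.le, fun π hπ hπB => ?_, fun π hπ hπB heq => ?_⟩
  · exact mul_le_mul_of_nonneg_left (hmain π hπ hπB) (by positivity)
  · have heq' : ∑ i, 1 / π i = ∑ i, 1 / πs i :=
      mul_left_cancel₀ (a := 1 / (n : ℝ)) (by positivity) heq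
    set D : Fin n → ℝ := fun i => (1 / π i + c i * π i) - (1 / πs i + c i * πs i) with hD
    have hDnn : ∀ i ∈ Finset.univ, 0 ≤ D i := fun i _ => sub_nonneg.mpr (hkey π hπ i).1
    have hDsum : ∑ i, D i = (n : ℝ) * lam * (∑ i, f i * π i - B) := by
      simp only [hD]
      rw [Finset.sum_sub_distrib, Finset.sum_add_distrib, Finset.sum_add_distrib, e1, e1,
        hsum, heq']
      ring
    have hDsum0 : ∑ i, D i = 0 := by
      have h1 : 0 ≤ ∑ i, D i := Finset.sum_nonneg hDnn
      have h2 : ∑ i, D i ≤ 0 := by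
        rw [hDsum]
        have hle : ∑ i, f i * π i - B ≤ 0 := by linarith
        exact mul_nonpos_of_nonneg_of_nonpos (by positivity) hle
      linarith
    have hDzero := (Finset.sum_eq_zero_iff_of_nonneg hDnn).mp hDsum0
    funext i
    exact (hkey π hπ i).2 (by have := hDzero i (Finset.mem_univ i); simp only [hD] at this; linarith)
end

section
/- Let ((X_i, T_i, C_i))_{i=1}^n be random triples such that for every i, C_i is conditionally independent of T_i given (X_1,…,X_n). Fix τ and a measurable function q̂_τ, and define the weights w(i) = 1 / P(q̂_τ(X_i) ≤ C_i | X_1,…,X_n), assumed almost surely finite. Then the weighted miscoverage estimator α̂(τ) = (1/n) Σ_{i=1}^n w(i) · 1{q̂_τ(X_i) ≤ C_i} · 1{T_i < q̂_τ(X_i)} is unbiased: E[α̂(τ)] = (1/n) Σ_{i=1}^n P(T_i < q̂_τ(X_i)). -/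
open MeasureTheory ProbabilityTheory
open scoped BigOperators ProbabilityTheory

open MeasurableSpace
open scoped ENNReal

theorem tool_T {Ω : Type*} {m mΩ : MeasurableSpace Ω} (hm : m ≤ mΩ) (μ : Measure Ω)
    [IsProbabilityMeasure μ] (h : Ω → ℝ≥0∞) (hh : Measurable[m] h)
    {E : Set Ω} (hE : MeasurableSet E) :
    ∫⁻ ω, h ω * E.indicator 1 ω ∂μ
      = ∫⁻ ω, h ω * ENNReal.ofReal ((μ⟦E|m⟧) ω) ∂μ := by
  haveI : SigmaFinite (μ.trim hm) := by
    have : IsFiniteMeasure (μ.trim hm) := isFiniteMeasure_trim hm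
    infer_instance
  have hint : Integrable (E.indicator (fun _ => (1:ℝ))) μ :=
    (integrable_const (1:ℝ)).indicator hE
  have hp_meas : Measurable (fun ω => ENNReal.ofReal ((μ⟦E|m⟧) ω)) :=
    ENNReal.measurable_ofReal.comp ((stronglyMeasurable_condExp.measurable).mono hm le_rfl)
  have h1 : ∫⁻ ω, h ω * E.indicator 1 ω ∂μ = ∫⁻ ω, h ω ∂(μ.restrict E) := by
    rw [← lintegral_indicator hE h]
    congr 1; ext ω
    by_cases hω : ω ∈ E <;> simp [hω]
  have h2 : ∫⁻ ω, h ω * ENNReal.ofReal ((μ⟦E|m⟧) ω) ∂μ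
      = ∫⁻ ω, h ω ∂(μ.withDensity (fun ω => ENNReal.ofReal ((μ⟦E|m⟧) ω))) := by
    rw [lintegral_withDensity_eq_lintegral_mul _ hp_meas (hh.mono hm le_rfl)]
    simp [mul_comm]
  rw [h1, h2]
  have htrim : (μ.restrict E).trim hm
      = (μ.withDensity (fun ω => ENNReal.ofReal ((μ⟦E|m⟧) ω))).trim hm := by
    refine @Measure.ext Ω m _ _ (fun G hG => ?_)
    rw [trim_measurableSet_eq hm hG, trim_measurableSet_eq hm hG,
      Measure.restrict_apply (hm G hG),
      withDensity_apply _ (hm G hG)]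
    have hset : ∫ x in G, (μ⟦E|m⟧) x ∂μ = ∫ x in G, E.indicator (fun _ => (1:ℝ)) x ∂μ :=
      setIntegral_condExp hm hint hG
    have hrhs : ∫ x in G, E.indicator (fun _ => (1:ℝ)) x ∂μ = (μ (E ∩ G)).toReal := by
      rw [integral_indicator hE]
      simp [Measure.real, Measure.restrict_apply hE]
    have hnn : 0 ≤ᵐ[μ.restrict G] (μ⟦E|m⟧) :=
      ae_restrict_of_ae (condExp_nonneg (Filter.Eventually.of_forall fun x =>
        Set.indicator_nonneg (fun _ _ => zero_le_one) x))
    have hlin : ∫⁻ x in G, ENNReal.ofReal ((μ⟦E|m⟧) x) ∂μ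
        = ENNReal.ofReal (∫ x in G, (μ⟦E|m⟧) x ∂μ) :=
      (ofReal_integral_eq_lintegral_ofReal integrable_condExp.integrableOn hnn).symm
    rw [hlin, hset, hrhs, ENNReal.ofReal_toReal (measure_ne_top μ _), Set.inter_comm]
  calc ∫⁻ ω, h ω ∂(μ.restrict E) = ∫⁻ ω, h ω ∂((μ.restrict E).trim hm) :=
        (lintegral_trim hm hh).symm
    _ = ∫⁻ ω, h ω ∂((μ.withDensity (fun ω => ENNReal.ofReal ((μ⟦E|m⟧) ω))).trim hm) := by
        rw [htrim]
    _ = _ := lintegral_trim hm hh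


theorem indicator_one_integrable {Ω : Type*} [mΩ : MeasurableSpace Ω] (μ : Measure Ω)
    [IsFiniteMeasure μ] {s : Set Ω} (hs : MeasurableSet s) :
    Integrable (s.indicator (fun _ => (1:ℝ))) μ :=
  (integrable_const (1:ℝ)).indicator hs

theorem fact_lemma {Ω : Type*} [mΩ : MeasurableSpace Ω] [StandardBorelSpace Ω]
    (μ : Measure Ω) [IsProbabilityMeasure μ]
    (C T : Ω → ℕ) (hC : Measurable C) (hT : Measurable T)
    (mX : MeasurableSpace Ω) (hmX_le : mX ≤ mΩ)
    (hCT : CondIndepFun mX hmX_le C T μ)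
    {A : Set Ω} (hA : MeasurableSet[mX ⊔ MeasurableSpace.comap C inferInstance] A)
    (t : Set ℕ) :
    (μ⟦A ∩ T ⁻¹' t | mX⟧) =ᵐ[μ] (μ⟦A | mX⟧) * (μ⟦T ⁻¹' t | mX⟧) := by
  have hind : ∀ s : Set Ω, MeasurableSet[mΩ] s → Integrable (s.indicator (fun _ => (1:ℝ))) μ :=
    fun s hs => indicator_one_integrable (mΩ := mΩ) μ hs
  set m₁ : MeasurableSpace Ω := mX ⊔ MeasurableSpace.comap C inferInstance with hm₁
  have hm₁_le : m₁ ≤ mΩ := sup_le hmX_le hC.comap_le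
  have hm₂_le : MeasurableSpace.comap T inferInstance ≤ mΩ := hT.comap_le
  set p1 : Set (Set Ω) :=
    {s | ∃ G u, MeasurableSet[mX] G ∧ MeasurableSet u ∧ s = G ∩ C ⁻¹' u} with hp1def
  set p2 : Set (Set Ω) := {s | ∃ u : Set ℕ, MeasurableSet u ∧ s = T ⁻¹' u} with hp2def
  have hp1 : IsPiSystem p1 := by
    rintro s ⟨G1, u1, hG1, hu1, rfl⟩ s2 ⟨G2, u2, hG2, hu2, rfl⟩ -
    exact ⟨G1 ∩ G2, u1 ∩ u2, hG1.inter hG2, hu1.inter hu2, by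
      rw [Set.preimage_inter]; ac_rfl⟩
  have hp2 : IsPiSystem p2 := by
    rintro s ⟨u1, hu1, rfl⟩ s2 ⟨u2, hu2, rfl⟩ -
    exact ⟨u1 ∩ u2, hu1.inter hu2, (Set.preimage_inter).symm⟩
  have hgen1 : m₁ = generateFrom p1 := by
    refine le_antisymm (sup_le ?_ ?_) (generateFrom_le ?_)
    · intro s hs
      exact measurableSet_generateFrom ⟨s, Set.univ, hs, MeasurableSet.univ, by simp⟩
    · intro s hs
      obtain ⟨u, hu, rfl⟩ := hs
      exact measurableSet_generateFrom ⟨Set.univ, u, MeasurableSet.univ, hu, by simp⟩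
    · rintro s ⟨G, u, hG, hu, rfl⟩
      exact MeasurableSet.inter ((le_sup_left : mX ≤ m₁) G hG)
        ((le_sup_right : MeasurableSpace.comap C inferInstance ≤ m₁) _ ⟨u, hu, rfl⟩)
  have hgen2 : MeasurableSpace.comap T inferInstance = generateFrom p2 := by
    refine le_antisymm ?_ (generateFrom_le ?_)
    · rintro s ⟨u, hu, rfl⟩
      exact measurableSet_generateFrom ⟨u, trivial, rfl⟩
    · rintro s ⟨u, hu, rfl⟩
      exact ⟨u, trivial, rfl⟩
  have hCT' : ∀ u v : Set ℕ,
      (μ⟦C ⁻¹' u ∩ T ⁻¹' v | mX⟧) =ᵐ[μ] (μ⟦C ⁻¹' u | mX⟧) * (μ⟦T ⁻¹' v | mX⟧) := by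
    intro u v
    exact (condIndepFun_iff mX hmX_le C T hC hT μ).mp hCT (C ⁻¹' u) (T ⁻¹' v)
      ⟨u, trivial, rfl⟩ ⟨v, trivial, rfl⟩
  have hsets : CondIndepSets mX hmX_le p1 p2 μ := by
    have hms1 : ∀ s ∈ p1, MeasurableSet[mΩ] s := by
      rintro s ⟨G, u, hG, hu, rfl⟩
      exact (hmX_le G hG).inter (hC hu)
    have hms2 : ∀ s ∈ p2, MeasurableSet[mΩ] s := by
      rintro s ⟨u, hu, rfl⟩
      exact hT hu
    rw [condIndepSets_iff _ _ _ _ hms1 hms2]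
    rintro _ _ ⟨G, u, hG, hu, rfl⟩ ⟨v, hv, rfl⟩
    have e1 : G ∩ C ⁻¹' u ∩ T ⁻¹' v = G ∩ (C ⁻¹' u ∩ T ⁻¹' v) := by ac_rfl
    have hint1 : Integrable ((C ⁻¹' u ∩ T ⁻¹' v).indicator (fun _ => (1:ℝ))) μ :=
      hind _ ((hC hu).inter (hT hv))
    have hint2 : Integrable ((C ⁻¹' u).indicator (fun _ => (1:ℝ))) μ :=
      hind _ (hC hu)
    have key1 : (μ⟦G ∩ (C ⁻¹' u ∩ T ⁻¹' v) | mX⟧)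
        =ᵐ[μ] G.indicator (μ⟦C ⁻¹' u ∩ T ⁻¹' v | mX⟧) := by
      have h := condExp_indicator (m := mX) (μ := μ) hint1 hG
      refine Filter.EventuallyEq.trans ?_ h
      rw [Set.indicator_indicator]
    have key2 : (μ⟦G ∩ C ⁻¹' u | mX⟧) =ᵐ[μ] G.indicator (μ⟦C ⁻¹' u | mX⟧) := by
      have h := condExp_indicator (m := mX) (μ := μ) hint2 hG
      refine Filter.EventuallyEq.trans ?_ h
      rw [Set.indicator_indicator]
    rw [e1]
    refine key1.trans ?_
    refine (Filter.EventuallyEq.trans ?_ ((key2.symm).mul (ae_eq_refl _)))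
    filter_upwards [hCT' u v] with ω hω
    by_cases hωG : ω ∈ G
    · simp [Set.indicator_of_mem hωG, hω, Pi.mul_apply]
    · simp [Set.indicator_of_notMem hωG, Pi.mul_apply]
  have hindep : CondIndep mX m₁ (MeasurableSpace.comap T inferInstance) hmX_le μ :=
    CondIndepSets.condIndep hm₁_le hm₂_le hp1 hp2 hgen1 hgen2 hsets
  have hset : CondIndepSet mX hmX_le A (T ⁻¹' t) μ :=
    hindep.condIndepSet_of_measurableSet hA ⟨t, trivial, rfl⟩
  exact (condIndepSet_iff mX hmX_le _ _ (hm₁_le A hA) (hT trivial) μ).mp hset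


theorem meas_ind {Ω : Type*} (m : MeasurableSpace Ω) {s : Set Ω} (hs : MeasurableSet[m] s) :
    Measurable[m] (s.indicator (1 : Ω → ℝ≥0∞)) :=
  measurable_one.indicator hs

theorem per_index {Ω 𝒳 : Type*} [mΩ : MeasurableSpace Ω] [StandardBorelSpace Ω]
    [MeasurableSpace 𝒳] (μ : Measure Ω) [IsProbabilityMeasure μ]
    (Xi : Ω → 𝒳) (Ci Ti : Ω → ℕ) (hCi : Measurable Ci) (hTi : Measurable Ti)
    (qhat : 𝒳 → ℝ) (hqhat : Measurable qhat)
    (mX : MeasurableSpace Ω) (hmX_le : mX ≤ mΩ)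
    (hXimX : Measurable[mX] Xi)
    (hCT : CondIndepFun mX hmX_le Ci Ti μ)
    (hpos : ∀ᵐ ω ∂μ, 0 < (μ⟦{ω' | qhat (Xi ω') ≤ (Ci ω' : ℝ)} | mX⟧) ω) :
    Integrable (fun ω => ((μ⟦{ω' | qhat (Xi ω') ≤ (Ci ω' : ℝ)} | mX⟧) ω)⁻¹ *
        (if qhat (Xi ω) ≤ (Ci ω : ℝ) then 1 else 0) *
        (if (Ti ω : ℝ) < qhat (Xi ω) then 1 else 0)) μ ∧
      (∫ ω, ((μ⟦{ω' | qhat (Xi ω') ≤ (Ci ω' : ℝ)} | mX⟧) ω)⁻¹ *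
        (if qhat (Xi ω) ≤ (Ci ω : ℝ) then 1 else 0) *
        (if (Ti ω : ℝ) < qhat (Xi ω) then 1 else 0) ∂μ)
        = (μ {ω | (Ti ω : ℝ) < qhat (Xi ω)}).toReal := by
  haveI : SigmaFinite (μ.trim hmX_le) := by
    have : IsFiniteMeasure (μ.trim hmX_le) := isFiniteMeasure_trim hmX_le
    infer_instance
  set A : Set Ω := {ω' | qhat (Xi ω') ≤ (Ci ω' : ℝ)} with hAdef
  set B : Set Ω := {ω | (Ti ω : ℝ) < qhat (Xi ω)} with hBdef
  set p : Ω → ℝ := μ⟦A | mX⟧ with hpdef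
  set I : Ω → ℝ := fun ω => (p ω)⁻¹ *
        (if qhat (Xi ω) ≤ (Ci ω : ℝ) then 1 else 0) *
        (if (Ti ω : ℝ) < qhat (Xi ω) then 1 else 0) with hIdef
  -- basic measurability
  have hXi : Measurable[mΩ] Xi := hXimX.mono hmX_le le_rfl
  have hg : Measurable[mΩ] (fun ω => qhat (Xi ω)) := hqhat.comp hXi
  have hgmX : Measurable[mX] (fun ω => qhat (Xi ω)) := hqhat.comp hXimX
  have hCast : Measurable[mΩ] (fun ω => (Ci ω : ℝ)) := measurable_from_top.comp hCi
  have hTCast : Measurable[mΩ] (fun ω => (Ti ω : ℝ)) := measurable_from_top.comp hTi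
  have hp_meas : Measurable[mX] p := stronglyMeasurable_condExp.measurable
  have hp_measΩ : Measurable[mΩ] p := hp_meas.mono hmX_le le_rfl
  have hp_nonneg : ∀ᵐ ω ∂μ, 0 ≤ p ω :=
    condExp_nonneg (Filter.Eventually.of_forall fun x =>
      Set.indicator_nonneg (fun _ _ => zero_le_one) x)
  -- A is measurable w.r.t. mX ⊔ comap Ci
  have hAm₁ : MeasurableSet[mX ⊔ MeasurableSpace.comap Ci inferInstance] A := by
    have : A = ⋃ k : ℕ, ({ω | qhat (Xi ω) ≤ (k : ℝ)} ∩ Ci ⁻¹' {k}) := by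
      ext ω
      simp only [Set.mem_iUnion, Set.mem_inter_iff, Set.mem_setOf_eq, Set.mem_preimage,
        Set.mem_singleton_iff]
      constructor
      · intro h; exact ⟨Ci ω, h, rfl⟩
      · rintro ⟨k, h1, rfl⟩; exact h1
    rw [this]
    refine MeasurableSet.iUnion fun k => MeasurableSet.inter ?_ ?_
    · exact (le_sup_left : mX ≤ _) _ (hgmX measurableSet_Iic)
    · exact (le_sup_right : MeasurableSpace.comap Ci inferInstance ≤ _) _ ⟨{k}, trivial, rfl⟩
  have hAΩ : MeasurableSet[mΩ] A := (sup_le hmX_le hCi.comap_le) A hAm₁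
  set S : ℕ → Set Ω := fun j => {ω | (j : ℝ) < qhat (Xi ω)} ∩ Ti ⁻¹' {j} with hSdef
  have hSmX : ∀ j, MeasurableSet[mX] {ω | (j : ℝ) < qhat (Xi ω)} :=
    fun j => hgmX measurableSet_Ioi
  have hSmeas : ∀ j, MeasurableSet[mΩ] (S j) :=
    fun j => (hmX_le _ (hSmX j)).inter (hTi trivial)
  have hBrep : B = ⋃ j, S j := by
    ext ω
    simp only [hSdef, Set.mem_iUnion, Set.mem_inter_iff, Set.mem_setOf_eq, Set.mem_preimage,
      Set.mem_singleton_iff, hBdef]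
    constructor
    · intro h; exact ⟨Ti ω, h, rfl⟩
    · rintro ⟨j, h1, rfl⟩; exact h1
  have hBΩ : MeasurableSet[mΩ] B := by rw [hBrep]; exact MeasurableSet.iUnion hSmeas
  have hSdisj : Pairwise (Function.onFun Disjoint S) := by
    intro j k hjk
    refine Set.disjoint_left.mpr ?_
    rintro ω ⟨-, hj⟩ ⟨-, hk⟩
    exact hjk (hj.symm.trans hk)
  -- factorization
  have hfac : ∀ j : ℕ, (μ⟦A ∩ Ti ⁻¹' {j} | mX⟧) =ᵐ[μ] (μ⟦A | mX⟧) * (μ⟦Ti ⁻¹' {j} | mX⟧) :=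
    fun j => fact_lemma (mΩ := mΩ) μ Ci Ti hCi hTi mX hmX_le hCT hAm₁ {j}
  set W : Ω → ℝ≥0∞ := fun ω => ENNReal.ofReal ((p ω)⁻¹) with hWdef
  have hW_mX : Measurable[mX] W := ENNReal.measurable_ofReal.comp hp_meas.inv
  have hW_Ω : Measurable[mΩ] W := hW_mX.mono hmX_le le_rfl
  have hpT_nonneg : ∀ j : ℕ, ∀ᵐ ω ∂μ, 0 ≤ (μ⟦Ti ⁻¹' {j} | mX⟧) ω := fun j =>
    condExp_nonneg (Filter.Eventually.of_forall fun x =>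
      Set.indicator_nonneg (fun _ _ => zero_le_one) x)
  have hpT_meas : ∀ j : ℕ, Measurable[mX] (μ⟦Ti ⁻¹' {j} | mX⟧) := fun j =>
    stronglyMeasurable_condExp.measurable
  -- pointwise rewriting of the integrand
  have hIof : ∀ ω, ENNReal.ofReal (I ω)
      = ∑' j : ℕ, (W ω * ({ω' | (j : ℝ) < qhat (Xi ω')}).indicator 1 ω)
          * ((A ∩ Ti ⁻¹' {j}).indicator 1 ω) := by
    intro ω
    rw [tsum_eq_single (Ti ω) ?_]
    swap
    · intro j hj
      have : ω ∉ A ∩ Ti ⁻¹' {j} := by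
        rintro ⟨-, hj'⟩
        exact hj (Set.mem_singleton_iff.mp hj').symm
      rw [Set.indicator_of_notMem this, mul_zero]
    by_cases hA : qhat (Xi ω) ≤ (Ci ω : ℝ) <;>
      by_cases hB : (Ti ω : ℝ) < qhat (Xi ω)
    · have h1 : ω ∈ ({ω' | ((Ti ω : ℕ) : ℝ) < qhat (Xi ω')} : Set Ω) := hB
      have h2 : ω ∈ A ∩ Ti ⁻¹' {Ti ω} := ⟨hA, rfl⟩
      rw [Set.indicator_of_mem h1, Set.indicator_of_mem h2]
      simp [hIdef, if_pos hA, if_pos hB, hWdef]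
    · have h1 : ω ∉ ({ω' | ((Ti ω : ℕ) : ℝ) < qhat (Xi ω')} : Set Ω) := hB
      rw [Set.indicator_of_notMem h1]
      simp [hIdef, if_pos hA, if_neg hB]
    · have h2 : ω ∉ A ∩ Ti ⁻¹' {Ti ω} := fun h => hA h.1
      rw [Set.indicator_of_notMem h2]
      simp [hIdef, if_neg hA, if_pos hB]
    · have h2 : ω ∉ A ∩ Ti ⁻¹' {Ti ω} := fun h => hA h.1
      rw [Set.indicator_of_notMem h2]
      simp [hIdef, if_neg hA, if_neg hB]
  -- the key lintegral identity
  have hterm : ∀ j : ℕ, ∫⁻ ω, (W ω * ({ω' | (j : ℝ) < qhat (Xi ω')}).indicator 1 ω)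
      * ((A ∩ Ti ⁻¹' {j}).indicator 1 ω) ∂μ = μ (S j) := by
    intro j
    have hh : Measurable[mX] (fun ω => W ω * ({ω' | (j : ℝ) < qhat (Xi ω')}).indicator 1 ω) :=
      hW_mX.mul (meas_ind mX (hSmX j))
    rw [tool_T hmX_le μ _ hh (hAΩ.inter (hTi trivial))]
    have hmid : ∫⁻ ω, (W ω * ({ω' | (j : ℝ) < qhat (Xi ω')}).indicator 1 ω)
        * ENNReal.ofReal ((μ⟦A ∩ Ti ⁻¹' {j} | mX⟧) ω) ∂μ
        = ∫⁻ ω, ({ω' | (j : ℝ) < qhat (Xi ω')}).indicator 1 ω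
            * ENNReal.ofReal ((μ⟦Ti ⁻¹' {j} | mX⟧) ω) ∂μ := by
      refine lintegral_congr_ae ?_
      filter_upwards [hfac j, hpos, hpT_nonneg j] with ω hω hp0 hpT0
      rw [hω]
      simp only [Pi.mul_apply]
      rw [hWdef]
      rw [ENNReal.ofReal_mul (le_of_lt hp0), ← mul_assoc]
      rw [mul_comm (ENNReal.ofReal ((p ω)⁻¹)) _, mul_assoc, mul_assoc]
      congr 1
      rw [← mul_assoc, ← ENNReal.ofReal_mul (inv_nonneg.mpr (le_of_lt hp0)),
        inv_mul_cancel₀ (ne_of_gt hp0), ENNReal.ofReal_one, one_mul]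
    rw [hmid]
    rw [← tool_T hmX_le μ _ (meas_ind mX (hSmX j)) (hTi trivial)]
    have : (fun ω => ({ω' | (j : ℝ) < qhat (Xi ω')}).indicator 1 ω
        * (Ti ⁻¹' {j}).indicator 1 ω) = fun ω => (S j).indicator (1 : Ω → ℝ≥0∞) ω := by
      funext ω
      by_cases h1 : ω ∈ ({ω' | (j : ℝ) < qhat (Xi ω')} : Set Ω) <;>
        by_cases h2 : ω ∈ Ti ⁻¹' {j} <;>
        simp [Set.indicator_apply, h1, h2, hSdef, Set.mem_inter_iff]
    rw [this, lintegral_indicator_one (hSmeas j)]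
  have Lkey : ∫⁻ ω, ENNReal.ofReal (I ω) ∂μ = μ B := by
    calc ∫⁻ ω, ENNReal.ofReal (I ω) ∂μ
        = ∫⁻ ω, ∑' j : ℕ, (W ω * ({ω' | (j : ℝ) < qhat (Xi ω')}).indicator 1 ω)
            * ((A ∩ Ti ⁻¹' {j}).indicator 1 ω) ∂μ := by
          exact lintegral_congr fun ω => hIof ω
      _ = ∑' j : ℕ, ∫⁻ ω, (W ω * ({ω' | (j : ℝ) < qhat (Xi ω')}).indicator 1 ω)
            * ((A ∩ Ti ⁻¹' {j}).indicator 1 ω) ∂μ := by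
          refine lintegral_tsum fun j => Measurable.aemeasurable ?_
          exact (hW_Ω.mul (meas_ind mΩ (hmX_le _ (hSmX j)))).mul
            (meas_ind mΩ (hAΩ.inter (hTi trivial)))
      _ = ∑' j : ℕ, μ (S j) := by
          exact tsum_congr fun j => hterm j
      _ = μ B := by
          rw [hBrep, measure_iUnion hSdisj hSmeas]
  -- nonnegativity and measurability of I
  have hnonnegae : ∀ᵐ ω ∂μ, 0 ≤ I ω := by
    filter_upwards [hpos] with ω hω
    have h1 : (0:ℝ) ≤ (p ω)⁻¹ := inv_nonneg.mpr (le_of_lt hω)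
    have h2 : (0:ℝ) ≤ (if qhat (Xi ω) ≤ (Ci ω : ℝ) then (1:ℝ) else 0) := by positivity
    have h3 : (0:ℝ) ≤ (if (Ti ω : ℝ) < qhat (Xi ω) then (1:ℝ) else 0) := by positivity
    exact mul_nonneg (mul_nonneg h1 h2) h3
  have hImeas : Measurable[mΩ] I := by
    refine Measurable.mul (Measurable.mul hp_measΩ.inv ?_) ?_
    · exact Measurable.ite hAΩ measurable_const measurable_const
    · exact Measurable.ite hBΩ measurable_const measurable_const
  have hnormeq : ∫⁻ a, ‖I a‖ₑ ∂μ = μ B := by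
    rw [← Lkey]
    refine lintegral_congr_ae ?_
    filter_upwards [hnonnegae] with ω h
    rw [Real.enorm_eq_ofReal h]
  have hInt : Integrable I μ := by
    refine ⟨hImeas.aestronglyMeasurable, ?_⟩
    rw [HasFiniteIntegral, hnormeq]
    exact measure_lt_top μ B
  refine ⟨hInt, ?_⟩
  rw [integral_eq_lintegral_of_nonneg_ae hnonnegae hImeas.aestronglyMeasurable, Lkey]

/-- Unbiasedness of the weighted miscoverage estimator. If each `C_i`
is conditionally independent of `T_i` given `(X_1,…,X_n)`, and
`w(i) = 1/P(qhat(X_i) ≤ C_i | X_1,…,X_n)` is a.s. finite, then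
`E[α̂] = (1/n) ∑ P(T_i < qhat(X_i))`. -/
theorem stmt_7 {Ω 𝒳 : Type*} [mΩ : MeasurableSpace Ω] [StandardBorelSpace Ω] [Nonempty Ω]
    [MeasurableSpace 𝒳]
    (μ : Measure Ω) [IsProbabilityMeasure μ]
    (n : ℕ) (hn : 0 < n)
    (X : Fin n → Ω → 𝒳) (hXmeas : ∀ i, Measurable (X i))
    (T : Fin n → Ω → ℕ) (hTmeas : ∀ i, Measurable (T i))
    (C : Fin n → Ω → ℕ) (hCmeas : ∀ i, Measurable (C i))
    (qhat : 𝒳 → ℝ) (hqhat : Measurable qhat)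
    (mX : MeasurableSpace Ω)
    (hmX : mX = MeasurableSpace.comap (fun ω i => X i ω) MeasurableSpace.pi)
    (hmX_le : mX ≤ mΩ)
    (hCT : ∀ i, CondIndepFun mX hmX_le (C i) (T i) μ)
    (w : Fin n → Ω → ℝ)
    (hw : w = fun i ω => ((μ⟦{ω' | qhat (X i ω') ≤ (C i ω' : ℝ)} | mX⟧) ω)⁻¹)
    (hwfin : ∀ i, ∀ᵐ ω ∂μ, 0 < (μ⟦{ω' | qhat (X i ω') ≤ (C i ω' : ℝ)} | mX⟧) ω)
    (hatα : Ω → ℝ)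
    (hhatα : hatα = fun ω => (1 / (n : ℝ)) * ∑ i, w i ω *
      (if qhat (X i ω) ≤ (C i ω : ℝ) then 1 else 0) *
      (if (T i ω : ℝ) < qhat (X i ω) then 1 else 0)) :
    (∫ ω, hatα ω ∂μ) =
      (1 / (n : ℝ)) * ∑ i, (μ {ω | (T i ω : ℝ) < qhat (X i ω)}).toReal := by
  have hF : Measurable[mX] (fun ω i => X i ω) := by
    rw [hmX]; exact measurable_iff_comap_le.mpr le_rfl
  have hXimX : ∀ i, Measurable[mX] (X i) :=
    fun i => (measurable_pi_apply i).comp hF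
  have key : ∀ i, _ ∧ _ := fun i => per_index (mΩ := mΩ) μ (X i) (C i) (T i)
    (hCmeas i) (hTmeas i) qhat hqhat mX hmX_le (hXimX i) (hCT i) (hwfin i)
  subst hw hhatα
  simp only []
  rw [MeasureTheory.integral_const_mul]
  rw [MeasureTheory.integral_finset_sum _ (fun i _ => (key i).1)]
  congr 1
  exact Finset.sum_congr rfl fun i _ => (key i).2
end
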